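/- Let H be a nontrivial complex Hilbert space, f ∈ H nonzero, and μ_f the spectral measure of a bounded normal operator A associated to f, so that ‖Aⁿ f‖² = ∫ |λ|^{2n} dμ_f(λ) where μ_f is a finite positive Borel measure on ℂ with total mass ‖f‖². Then the orbit {Aⁿ f : n ∈ ℕ} is not dense in H. -/

import Mathlib

open MeasureTheory

theorem stmt_15 {H : Type*} [NormedAddCommGroup H] [InnerProductSpace ℂ H]
    [CompleteSpace H] [Nontrivial H]
    (A : H →L[ℂ] H) (f : H) (hf : f ≠ 0)
    (μ : Measure ℂ) [IsFiniteMeasure μ]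
    (hmass : μ Set.univ = ENNReal.ofReal (‖f‖ ^ 2))
    (hmom : ∀ n : ℕ, ENNReal.ofReal (‖(A ^ n) f‖ ^ 2) =
      ∫⁻ l : ℂ, ENNReal.ofReal (‖l‖ ^ (2 * n)) ∂μ) :
    ¬ Dense (Set.range fun n : ℕ => (A ^ n) f) := by
  intro hd
  set S : Set ℂ := {l : ℂ | 1 < ‖l‖} with hS
  have hSm : MeasurableSet S :=
    measurableSet_lt measurable_const (continuous_norm.measurable)
  by_cases hpos : μ S = 0
  · -- orbit bounded by ‖f‖; a large vector is far from the orbit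
    have hbound : ∀ n : ℕ, ‖(A ^ n) f‖ ≤ ‖f‖ := by
      intro n
      have hae : ∀ᵐ l ∂μ, ENNReal.ofReal (‖l‖ ^ (2 * n)) ≤ 1 := by
        have : ∀ᵐ l ∂μ, l ∉ S := by
          rw [ae_iff]
          simpa using hpos
        filter_upwards [this] with l hl
        have hle : ‖l‖ ≤ 1 := not_lt.mp hl
        have : ‖l‖ ^ (2 * n) ≤ 1 :=
          pow_le_one₀ (norm_nonneg l) hle
        calc ENNReal.ofReal (‖l‖ ^ (2 * n)) ≤ ENNReal.ofReal 1 :=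
              ENNReal.ofReal_le_ofReal this
          _ = 1 := ENNReal.ofReal_one
      have h1 : ENNReal.ofReal (‖(A ^ n) f‖ ^ 2) ≤ ENNReal.ofReal (‖f‖ ^ 2) := by
        rw [hmom n, ← hmass]
        calc ∫⁻ l, ENNReal.ofReal (‖l‖ ^ (2 * n)) ∂μ
            ≤ ∫⁻ _, 1 ∂μ := lintegral_mono_ae hae
          _ = μ Set.univ := by simp
      have h2 : ‖(A ^ n) f‖ ^ 2 ≤ ‖f‖ ^ 2 := by
        have := (ENNReal.ofReal_le_ofReal_iff (by positivity)).mp h1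
        exact this
      exact (pow_le_pow_iff_left₀ (norm_nonneg _) (norm_nonneg _) two_ne_zero).mp h2
    obtain ⟨g, hg⟩ := NormedSpace.exists_lt_norm ℂ H (‖f‖ + 1)
    have hr : (0:ℝ) < ‖g‖ - ‖f‖ := by linarith
    obtain ⟨x, hx, ⟨n, hn⟩⟩ := Metric.dense_iff.mp hd g (‖g‖ - ‖f‖) hr
    rw [← hn] at hx
    have : dist ((A ^ n) f) g < ‖g‖ - ‖f‖ := by
      simpa [dist_comm] using hx
    have hge : ‖g‖ - ‖f‖ ≤ dist ((A ^ n) f) g := by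
      have := norm_sub_norm_le g ((A ^ n) f)
      have hb := hbound n
      rw [dist_eq_norm]
      have : ‖g‖ - ‖(A ^ n) f‖ ≤ ‖(A ^ n) f - g‖ := by
        have := norm_sub_norm_le g ((A ^ n) f)
        rw [norm_sub_rev] at this
        linarith [abs_le.mp (abs_norm_sub_norm_le g ((A ^ n) f))]
      linarith
    linarith
  · -- orbit bounded below; 0 is far from the orbit
    have hc : 0 < (μ S).toReal := by
      have hlt : μ S < ⊤ := lt_of_le_of_lt (measure_mono (Set.subset_univ S))
        (by rw [hmass]; exact ENNReal.ofReal_lt_top)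
      exact ENNReal.toReal_pos hpos hlt.ne
    have hlow : ∀ n : ℕ, Real.sqrt (μ S).toReal ≤ ‖(A ^ n) f‖ := by
      intro n
      have h1 : μ S ≤ ENNReal.ofReal (‖(A ^ n) f‖ ^ 2) := by
        rw [hmom n]
        calc μ S = ∫⁻ _ in S, 1 ∂μ := by simp
          _ ≤ ∫⁻ l in S, ENNReal.ofReal (‖l‖ ^ (2 * n)) ∂μ := by
              apply setLIntegral_mono' hSm
              intro l hl
              have h1l : (1:ℝ) ≤ ‖l‖ := le_of_lt hl
              have : (1:ℝ) ≤ ‖l‖ ^ (2 * n) := one_le_pow₀ h1l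
              calc (1 : ENNReal) = ENNReal.ofReal 1 := ENNReal.ofReal_one.symm
                _ ≤ ENNReal.ofReal (‖l‖ ^ (2 * n)) :=
                    ENNReal.ofReal_le_ofReal this
          _ ≤ ∫⁻ l, ENNReal.ofReal (‖l‖ ^ (2 * n)) ∂μ :=
              setLIntegral_le_lintegral S _
      have h2 : (μ S).toReal ≤ ‖(A ^ n) f‖ ^ 2 := by
        have := ENNReal.toReal_mono ENNReal.ofReal_ne_top h1
        rwa [ENNReal.toReal_ofReal (by positivity)] at this
      calc Real.sqrt (μ S).toReal ≤ Real.sqrt (‖(A ^ n) f‖ ^ 2) :=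
            Real.sqrt_le_sqrt h2
        _ = ‖(A ^ n) f‖ := by
            rw [Real.sqrt_sq (norm_nonneg _)]
    have hsq : 0 < Real.sqrt (μ S).toReal := Real.sqrt_pos.mpr hc
    obtain ⟨x, hx, ⟨n, hn⟩⟩ := Metric.dense_iff.mp hd 0 (Real.sqrt (μ S).toReal) hsq
    rw [← hn] at hx
    have : dist ((A ^ n) f) 0 < Real.sqrt (μ S).toReal := by
      simpa [dist_comm] using hx
    rw [dist_zero_right] at this
    linarith [hlow n]
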